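/- arXiv:math/0605017 — 4 statements merged into one kernel-verified Lean document; each statement's English description precedes it below -/
import Mathlib

section
/- Let h : [0,L] → ℝⁿ be weakly differentiable (C¹ suffices) with h(0) = h(L), and let h̄ = (1/L)∫₀ᴸ h(s) ds be its mean. Then sup_{u ∈ [0,L]} |h(u) − h̄| ≤ (1/2) ∫₀ᴸ |h'(s)| ds. -/
open Real

/-- Poincaré-type inequality: for a C¹ periodic map `h : [0,L] → ℝⁿ` with mean `h̄`,
`sup_{u∈[0,L]} ‖h u - h̄‖ ≤ (1/2) ∫₀ᴸ ‖h'‖`. -/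
theorem sup_dist_mean_le_half_integral_deriv
    (n : ℕ) (L : ℝ) (hL : 0 < L)
    (h : ℝ → EuclideanSpace ℝ (Fin n)) (hh : ContDiff ℝ 1 h)
    (hper : h 0 = h L) :
    ∀ u ∈ Set.Icc (0 : ℝ) L,
      ‖h u - L⁻¹ • ∫ s in (0:ℝ)..L, h s‖ ≤
        (1 / 2) * ∫ s in (0:ℝ)..L, ‖deriv h s‖ := by
  intro u hu
  have hc : Continuous h := hh.continuous
  have hc' : Continuous (deriv h) := hh.continuous_deriv le_rfl
  have hcn : Continuous fun t => ‖deriv h t‖ := hc'.norm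
  set I : ℝ := ∫ s in (0:ℝ)..L, ‖deriv h s‖ with hIdef
  have ftc : ∀ a b : ℝ, a ≤ b → ‖h b - h a‖ ≤ ∫ t in a..b, ‖deriv h t‖ := by
    intro a b hab
    have heq : (∫ t in a..b, deriv h t) = h b - h a :=
      intervalIntegral.integral_deriv_eq_sub
        (fun x _ => (hh.differentiable one_ne_zero).differentiableAt)
        (hc'.intervalIntegrable a b)
    calc ‖h b - h a‖ = ‖∫ t in a..b, deriv h t‖ := by rw [heq]
      _ ≤ ∫ t in a..b, ‖deriv h t‖ :=
        intervalIntegral.norm_integral_le_integral_norm hab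
  have main : ∀ a b : ℝ, a ∈ Set.Icc (0:ℝ) L → b ∈ Set.Icc (0:ℝ) L → a ≤ b →
      ‖h b - h a‖ ≤ I / 2 := by
    intro a b ha hb hab
    have hsplit : (∫ t in (0:ℝ)..a, ‖deriv h t‖) + (∫ t in a..b, ‖deriv h t‖)
        + (∫ t in b..L, ‖deriv h t‖) = I := by
      rw [intervalIntegral.integral_add_adjacent_intervals
        (hcn.intervalIntegrable 0 a) (hcn.intervalIntegrable a b),
        intervalIntegral.integral_add_adjacent_intervals
        (hcn.intervalIntegrable 0 b) (hcn.intervalIntegrable b L)]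
    have h1 : ‖h b - h a‖ ≤ ∫ t in a..b, ‖deriv h t‖ := ftc a b hab
    have h2 : ‖h b - h a‖ ≤ (∫ t in (0:ℝ)..a, ‖deriv h t‖)
        + ∫ t in b..L, ‖deriv h t‖ := by
      have heq : h b - h a = -(h a - h 0) - (h L - h b) := by
        rw [hper]; abel
      calc ‖h b - h a‖ = ‖-(h a - h 0) - (h L - h b)‖ := by rw [heq]
        _ ≤ ‖-(h a - h 0)‖ + ‖h L - h b‖ := norm_sub_le _ _
        _ = ‖h a - h 0‖ + ‖h L - h b‖ := by rw [norm_neg]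
        _ ≤ _ := add_le_add (ftc 0 a ha.1) (ftc b L hb.2)
    linarith
  have ptw : ∀ s ∈ Set.Icc (0:ℝ) L, ‖h u - h s‖ ≤ I / 2 := by
    intro s hs
    rcases le_total s u with hsu | hus
    · exact main s u hs hu hsu
    · rw [norm_sub_rev]; exact main u s hu hs hus
  have key : h u - L⁻¹ • ∫ s in (0:ℝ)..L, h s
      = L⁻¹ • ∫ s in (0:ℝ)..L, (h u - h s) := by
    rw [intervalIntegral.integral_sub intervalIntegrable_const
      (hc.intervalIntegrable 0 L), intervalIntegral.integral_const, sub_zero,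
      smul_sub, smul_smul, inv_mul_cancel₀ hL.ne', one_smul]
  have hbound : ‖∫ s in (0:ℝ)..L, (h u - h s)‖ ≤ L * (I / 2) := by
    calc ‖∫ s in (0:ℝ)..L, (h u - h s)‖ ≤ ∫ s in (0:ℝ)..L, ‖h u - h s‖ :=
        intervalIntegral.norm_integral_le_integral_norm hL.le
      _ ≤ ∫ _s in (0:ℝ)..L, (I / 2) := by
          apply intervalIntegral.integral_mono_on hL.le
            (((continuous_const.sub hc).norm).intervalIntegrable 0 L)
            intervalIntegrable_const
          intro s hs; exact ptw s hs
      _ = L * (I / 2) := by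
          rw [intervalIntegral.integral_const, smul_eq_mul, sub_zero]
  rw [key, norm_smul, norm_inv, Real.norm_eq_abs, abs_of_pos hL]
  calc L⁻¹ * ‖∫ s in (0:ℝ)..L, (h u - h s)‖ ≤ L⁻¹ * (L * (I / 2)) :=
        mul_le_mul_of_nonneg_left hbound (inv_nonneg.mpr hL.le)
    _ = (1 / 2) * I := by field_simp
end

section
/- Let C : S¹ × [0,1] → ℝⁿ be a smooth homotopy of immersed curves, L(v) the length of C(·,v), and for λ > 0 define ‖∂_v C(·,v)‖²_{H¹} := (1/L(v))∫ |∂_v C|² ds + λ L(v) ∫ |D_s ∂_v C|² ds, where ds = |∂_u C| du and D_s = (1/|∂_u C|)∂_u. Then |L(1) − L(0)| ≤ (1/√λ) ∫₀¹ ‖∂_v C(·,v)‖_{H¹} dv. -/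
open Real MeasureTheory

/-- The `u`-derivative of a homotopy. -/
noncomputable def Cu (n : ℕ) (C : ℝ → ℝ → EuclideanSpace ℝ (Fin n)) (u v : ℝ) :
    EuclideanSpace ℝ (Fin n) :=
  deriv (fun u' => C u' v) u

/-- The mixed `u,v`-derivative of a homotopy. -/
noncomputable def Cuv (n : ℕ) (C : ℝ → ℝ → EuclideanSpace ℝ (Fin n)) (u v : ℝ) :
    EuclideanSpace ℝ (Fin n) :=
  deriv (fun v' => Cu n C u v') v

/-- Length of the curve `C(·,v)` (curves are 2π-periodic maps `ℝ → ℝⁿ`). -/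
noncomputable def clen (n : ℕ) (C : ℝ → ℝ → EuclideanSpace ℝ (Fin n)) (v : ℝ) : ℝ :=
  ∫ u in (0:ℝ)..(2 * π), ‖Cu n C u v‖

/-- The `H¹` norm of the deformation `∂ᵥC(·,v)`:
`‖∂ᵥC‖²_{H¹} = (1/L)∫‖∂ᵥC‖² ds + λ L ∫‖D_s ∂ᵥC‖² ds` with `ds = |∂ᵤC| du`,
`D_s ∂ᵥC = |∂ᵤC|⁻¹ ∂ᵤᵥC`. -/
noncomputable def H1normOfDeformation (n : ℕ) (C : ℝ → ℝ → EuclideanSpace ℝ (Fin n))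
    (lam v : ℝ) : ℝ :=
  Real.sqrt ((clen n C v)⁻¹ *
      (∫ u in (0:ℝ)..(2 * π), ‖deriv (fun v' => C u v') v‖ ^ 2 * ‖Cu n C u v‖)
    + lam * clen n C v *
      ∫ u in (0:ℝ)..(2 * π), ‖(‖Cu n C u v‖⁻¹ : ℝ) • Cuv n C u v‖ ^ 2 * ‖Cu n C u v‖)

/-- Cauchy–Schwarz inequality for interval integrals of continuous functions. -/
lemma cs_interval {f g : ℝ → ℝ} (hf : Continuous f) (hg : Continuous g)
    {a b : ℝ} (hab : a ≤ b) :
    (∫ u in a..b, f u * g u) ^ 2 ≤ (∫ u in a..b, f u ^ 2) * (∫ u in a..b, g u ^ 2) := by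
  set A := ∫ u in a..b, f u ^ 2 with hA_def
  set B := ∫ u in a..b, f u * g u with hB_def
  set Cq := ∫ u in a..b, g u ^ 2 with hC_def
  have hA : 0 ≤ A := intervalIntegral.integral_nonneg hab fun u _ => sq_nonneg _
  have hCq : 0 ≤ Cq := intervalIntegral.integral_nonneg hab fun u _ => sq_nonneg _
  have i1 : IntervalIntegrable (fun u => f u ^ 2) volume a b :=
    (hf.pow 2).intervalIntegrable a b
  have key : ∀ t : ℝ, 0 ≤ A + 2 * t * B + t ^ 2 * Cq := by
    intro t
    have i2 : IntervalIntegrable (fun u => 2 * t * (f u * g u)) volume a b :=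
      (continuous_const.mul (hf.mul hg)).intervalIntegrable a b
    have i3 : IntervalIntegrable (fun u => t ^ 2 * g u ^ 2) volume a b :=
      (continuous_const.mul (hg.pow 2)).intervalIntegrable a b
    have h0 : 0 ≤ ∫ u in a..b, (f u + t * g u) ^ 2 :=
      intervalIntegral.integral_nonneg hab fun u _ => sq_nonneg _
    have hexp : (∫ u in a..b, (f u + t * g u) ^ 2)
        = A + 2 * t * B + t ^ 2 * Cq := by
      have h1 : ∀ u, (f u + t * g u) ^ 2
          = f u ^ 2 + 2 * t * (f u * g u) + t ^ 2 * g u ^ 2 := fun u => by ring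
      simp_rw [h1]
      rw [intervalIntegral.integral_add (i1.add i2) i3,
        intervalIntegral.integral_add i1 i2,
        intervalIntegral.integral_const_mul, intervalIntegral.integral_const_mul]
    linarith [hexp ▸ h0]
  have hstep : ∀ ε : ℝ, 0 < ε → B ^ 2 ≤ A * (Cq + ε) := by
    intro ε hε
    set s := Cq + ε with hs_def
    have hs : 0 < s := by positivity
    have h := key (-(B / s))
    have h3 : (A + 2 * (-(B / s)) * B + (-(B / s)) ^ 2 * Cq) * s ^ 2
        = A * s ^ 2 - 2 * B ^ 2 * s + B ^ 2 * Cq := by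
      field_simp
      ring
    have h2 : 0 ≤ A * s ^ 2 - 2 * B ^ 2 * s + B ^ 2 * Cq := by
      rw [← h3]; exact mul_nonneg h (by positivity)
    nlinarith [sq_nonneg B, mul_pos hs hs, mul_nonneg (sq_nonneg B) hε.le]
  refine le_of_forall_pos_le_add fun ε hε0 => ?_
  rcases eq_or_lt_of_le hA with hA0 | hA0
  · have h1 := hstep 1 one_pos
    nlinarith
  · have h1 := hstep (ε / A) (div_pos hε0 hA0)
    have h2 : A * (Cq + ε / A) = A * Cq + ε := by
      field_simp
    linarith

/-- The length functional is Lipschitz along an `H¹` path of curves: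
`|L(1) - L(0)| ≤ (1/√λ) ∫₀¹ ‖∂ᵥC(·,v)‖_{H¹} dv`. -/
theorem length_diff_le_H1_path_length
    (n : ℕ) (lam : ℝ) (hlam : 0 < lam)
    (C : ℝ → ℝ → EuclideanSpace ℝ (Fin n))
    (hC : ContDiff ℝ (⊤ : ℕ∞) fun p : ℝ × ℝ => C p.1 p.2)
    (hper : ∀ u v, C (u + 2 * π) v = C u v)
    (himm : ∀ u v, Cu n C u v ≠ 0) :
    |clen n C 1 - clen n C 0| ≤
      (Real.sqrt lam)⁻¹ * ∫ v in (0:ℝ)..1, H1normOfDeformation n C lam v := by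
  have hpi : (0:ℝ) < 2 * π := by positivity
  have h2pi : (0:ℝ) ≤ 2 * π := hpi.le
  set F : ℝ × ℝ → EuclideanSpace ℝ (Fin n) := fun p : ℝ × ℝ => C p.1 p.2 with hF_def
  set G : ℝ × ℝ → EuclideanSpace ℝ (Fin n) := fun p => fderiv ℝ F p (1, 0) with hG_def
  set Gv : ℝ × ℝ → EuclideanSpace ℝ (Fin n) := fun p => fderiv ℝ F p (0, 1) with hGv_def
  have hG : ContDiff ℝ (⊤ : ℕ∞) G := (hC.fderiv_right (by simp)).clm_apply contDiff_const
  have hGvs : ContDiff ℝ (⊤ : ℕ∞) Gv := (hC.fderiv_right (by simp)).clm_apply contDiff_const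
  set G2 : ℝ × ℝ → EuclideanSpace ℝ (Fin n) := fun p => fderiv ℝ G p (0, 1) with hG2_def
  have hG2 : ContDiff ℝ (⊤ : ℕ∞) G2 := (hG.fderiv_right (by simp)).clm_apply contDiff_const
  have hGc : Continuous G := hG.continuous
  have hGvc : Continuous Gv := hGvs.continuous
  have hG2c : Continuous G2 := hG2.continuous
  -- identification of the various derivatives
  have hCuG : ∀ u v, Cu n C u v = G (u, v) := by
    intro u v
    have h1 : HasDerivAt (fun u' : ℝ => ((u', v) : ℝ × ℝ)) (1, 0) u :=
      (hasDerivAt_id u).prodMk (hasDerivAt_const u v)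
    have h2 := (hC.differentiable (by simp) (u, v)).hasFDerivAt.comp_hasDerivAt u h1
    simp only [Cu]
    exact h2.deriv
  have hCvG : ∀ u v, deriv (fun v' => C u v') v = Gv (u, v) := by
    intro u v
    have h1 : HasDerivAt (fun v' : ℝ => ((u, v') : ℝ × ℝ)) (0, 1) v :=
      (hasDerivAt_const v u).prodMk (hasDerivAt_id v)
    have h2 := (hC.differentiable (by simp) (u, v)).hasFDerivAt.comp_hasDerivAt v h1
    exact h2.deriv
  have hCu_deriv_v : ∀ u v, HasDerivAt (fun v' => Cu n C u v') (G2 (u, v)) v := by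
    intro u v
    have h1 : HasDerivAt (fun v' : ℝ => ((u, v') : ℝ × ℝ)) (0, 1) v :=
      (hasDerivAt_const v u).prodMk (hasDerivAt_id v)
    have h2 := (hG.differentiable (by simp) (u, v)).hasFDerivAt.comp_hasDerivAt v h1
    have hfun : (fun v' => Cu n C u v') = fun v' => G (u, v') :=
      funext fun v' => hCuG u v'
    rw [hfun]
    exact h2
  have hCuvG : ∀ u v, Cuv n C u v = G2 (u, v) := by
    intro u v
    simp only [Cuv]
    exact (hCu_deriv_v u v).deriv
  have hGne : ∀ p : ℝ × ℝ, G p ≠ 0 := by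
    intro p
    have := himm p.1 p.2
    rwa [hCuG] at this
  -- the pointwise derivative of `v ↦ ‖∂ᵤC(u,v)‖`
  set gder : ℝ → ℝ → ℝ :=
    fun u v => (inner ℝ (G (u, v)) (G2 (u, v)) : ℝ) / ‖G (u, v)‖ with hgder_def
  have hnd : ∀ u v, HasDerivAt (fun v' => ‖Cu n C u v'‖) (gder u v) v := by
    intro u v
    have hne : ‖Cu n C u v‖ ≠ 0 := norm_ne_zero_iff.mpr (himm u v)
    have hder : HasDerivAt (fun v' => Cu n C u v') (Cuv n C u v) v := by
      rw [hCuvG]; exact hCu_deriv_v u v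
    have hsq : HasDerivAt (fun v' => ‖Cu n C u v'‖ ^ 2)
        (2 * (inner ℝ (Cu n C u v) (Cuv n C u v) : ℝ)) v := hder.norm_sq
    have h3 := hsq.sqrt (pow_ne_zero 2 hne)
    have hfun : (fun v' => Real.sqrt (‖Cu n C u v'‖ ^ 2)) = fun v' => ‖Cu n C u v'‖ :=
      funext fun v' => Real.sqrt_sq (norm_nonneg _)
    rw [hfun] at h3
    convert h3 using 1
    rw [Real.sqrt_sq (norm_nonneg _)]
    simp only [hgder_def]
    rw [hCuG, hCuvG]
    have hne' : ‖G (u, v)‖ ≠ 0 := norm_ne_zero_iff.mpr (hGne (u, v))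
    field_simp
  have hgb : ∀ u v, |gder u v| ≤ ‖G2 (u, v)‖ := by
    intro u v
    have hpos : 0 < ‖G (u, v)‖ := norm_pos_iff.mpr (hGne (u, v))
    simp only [hgder_def]
    rw [abs_div, abs_norm, div_le_iff₀ hpos]
    calc |(inner ℝ (G (u, v)) (G2 (u, v)) : ℝ)| ≤ ‖G (u, v)‖ * ‖G2 (u, v)‖ :=
          abs_real_inner_le_norm _ _
      _ = ‖G2 (u, v)‖ * ‖G (u, v)‖ := mul_comm _ _
  have hgdc : Continuous (fun p : ℝ × ℝ => gder p.1 p.2) := by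
    simp only [hgder_def]
    exact Continuous.div (hGc.inner hG2c) hGc.norm
      fun p => norm_ne_zero_iff.mpr (hGne p)
  -- derivative of the length functional
  set D : ℝ → ℝ := fun v => ∫ u in (0:ℝ)..(2 * π), gder u v with hD_def
  have hcontu : ∀ v : ℝ, Continuous fun u => gder u v := by
    intro v
    have : (fun u => gder u v) = (fun p : ℝ × ℝ => gder p.1 p.2) ∘ fun u => (u, v) := rfl
    rw [this]
    exact hgdc.comp (continuous_id.prodMk continuous_const)
  have hnormCu_cont : ∀ x : ℝ, Continuous fun u => ‖Cu n C u x‖ := by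
    intro x
    have h : (fun u => ‖Cu n C u x‖) = fun u => ‖G (u, x)‖ :=
      funext fun u => by rw [hCuG]
    rw [h]
    exact (hGc.comp (continuous_id.prodMk continuous_const)).norm
  have hD_hasDeriv : ∀ v₀ : ℝ, HasDerivAt (fun v => clen n C v) (D v₀) v₀ := by
    intro v₀
    obtain ⟨M, hM⟩ :=
      (isCompact_Icc.prod isCompact_Icc :
        IsCompact (Set.Icc (0:ℝ) (2 * π) ×ˢ Set.Icc (v₀ - 1) (v₀ + 1))).exists_bound_of_continuousOn
        hG2c.continuousOn
    have hmeas : ∀ᶠ x in nhds v₀, AEStronglyMeasurable (fun u => ‖Cu n C u x‖)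
        (volume.restrict (Set.uIoc (0:ℝ) (2 * π))) :=
      Filter.Eventually.of_forall fun x => (hnormCu_cont x).aestronglyMeasurable.restrict
    have hint : IntervalIntegrable (fun u => ‖Cu n C u v₀‖) volume 0 (2 * π) :=
      (hnormCu_cont v₀).intervalIntegrable _ _
    have hmeas' : AEStronglyMeasurable (fun u => gder u v₀)
        (volume.restrict (Set.uIoc (0:ℝ) (2 * π))) :=
      (hcontu v₀).aestronglyMeasurable.restrict
    have hbound : ∀ᵐ u ∂(volume : Measure ℝ), u ∈ Set.uIoc (0:ℝ) (2 * π) →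
        ∀ x ∈ Metric.ball v₀ 1, ‖gder u x‖ ≤ M := by
      refine MeasureTheory.ae_of_all _ fun u hu x hx => ?_
      rw [Set.uIoc_of_le h2pi] at hu
      have hx' : |x - v₀| < 1 := by
        rw [Metric.mem_ball, Real.dist_eq] at hx
        exact hx
      have hx2 := abs_lt.mp hx'
      have hmem : ((u, x) : ℝ × ℝ) ∈ Set.Icc (0:ℝ) (2 * π) ×ˢ Set.Icc (v₀ - 1) (v₀ + 1) := by
        constructor
        · exact ⟨hu.1.le, hu.2⟩
        · constructor <;> [linarith [hx2.1]; linarith [hx2.2]]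
      calc ‖gder u x‖ = |gder u x| := Real.norm_eq_abs _
        _ ≤ ‖G2 (u, x)‖ := hgb u x
        _ ≤ M := hM _ hmem
    have hbint : IntervalIntegrable (fun _ : ℝ => M) volume 0 (2 * π) :=
      intervalIntegrable_const
    have hdiff : ∀ᵐ u ∂(volume : Measure ℝ), u ∈ Set.uIoc (0:ℝ) (2 * π) →
        ∀ x ∈ Metric.ball v₀ 1, HasDerivAt (fun x' => ‖Cu n C u x'‖) (gder u x) x :=
      MeasureTheory.ae_of_all _ fun u _ x _ => hnd u x
    have key := intervalIntegral.hasDerivAt_integral_of_dominated_loc_of_deriv_le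
      (F := fun x u => ‖Cu n C u x‖) (F' := fun x u => gder u x) (bound := fun _ => M)
      (Metric.ball_mem_nhds v₀ one_pos) hmeas hint hmeas' hbound hbint hdiff
    have h2 := key.2
    simpa only [clen, hD_def] using h2
  -- continuity of `D`
  have hD_cont : Continuous D := by
    have huncurry : Continuous (Function.uncurry fun (v : ℝ) (u : ℝ) => gder u v) := by
      have : (Function.uncurry fun (v : ℝ) (u : ℝ) => gder u v)
          = (fun p : ℝ × ℝ => gder p.1 p.2) ∘ Prod.swap := rfl
      rw [this]
      exact hgdc.comp continuous_swap
    simpa only [hD_def] using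
      intervalIntegral.continuous_parametric_intervalIntegral_of_continuous'
        (μ := volume) huncurry 0 (2 * π)
  -- positivity and continuity of the length
  have hclen_eq : ∀ v, clen n C v = ∫ u in (0:ℝ)..(2 * π), ‖G (u, v)‖ := by
    intro v
    simp only [clen]
    exact intervalIntegral.integral_congr fun u _ => by rw [hCuG]
  have hclen_pos : ∀ v, 0 < clen n C v := by
    intro v
    rw [hclen_eq]
    apply intervalIntegral.intervalIntegral_pos_of_pos_on
    · exact ((hGc.comp (continuous_id.prodMk continuous_const)).norm).intervalIntegrable _ _
    · exact fun u _ => norm_pos_iff.mpr (hGne (u, v))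
    · exact hpi
  have hclen_cont : Continuous fun v => clen n C v := by
    have h : (fun v => clen n C v) = fun v => ∫ u in (0:ℝ)..(2 * π), ‖G (u, v)‖ :=
      funext hclen_eq
    rw [h]
    have huncurry : Continuous (Function.uncurry fun (v : ℝ) (u : ℝ) => ‖G (u, v)‖) :=
      (hGc.comp (continuous_snd.prodMk continuous_fst)).norm
    exact intervalIntegral.continuous_parametric_intervalIntegral_of_continuous'
      (μ := volume) huncurry 0 (2 * π)
  -- continuity of the H¹ norm
  have hP_eq : ∀ v, (∫ u in (0:ℝ)..(2 * π), ‖deriv (fun v' => C u v') v‖ ^ 2 * ‖Cu n C u v‖)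
      = ∫ u in (0:ℝ)..(2 * π), ‖Gv (u, v)‖ ^ 2 * ‖G (u, v)‖ := fun v =>
    intervalIntegral.integral_congr fun u _ => by rw [hCvG, hCuG]
  have hQ_eq : ∀ v, (∫ u in (0:ℝ)..(2 * π), ‖(‖Cu n C u v‖⁻¹ : ℝ) • Cuv n C u v‖ ^ 2 * ‖Cu n C u v‖)
      = ∫ u in (0:ℝ)..(2 * π), ‖(‖G (u, v)‖⁻¹ : ℝ) • G2 (u, v)‖ ^ 2 * ‖G (u, v)‖ := fun v =>
    intervalIntegral.integral_congr fun u _ => by rw [hCuG, hCuvG]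
  have hP_cont : Continuous fun v =>
      ∫ u in (0:ℝ)..(2 * π), ‖deriv (fun v' => C u v') v‖ ^ 2 * ‖Cu n C u v‖ := by
    have h : (fun v => ∫ u in (0:ℝ)..(2 * π), ‖deriv (fun v' => C u v') v‖ ^ 2 * ‖Cu n C u v‖)
        = fun v => ∫ u in (0:ℝ)..(2 * π), ‖Gv (u, v)‖ ^ 2 * ‖G (u, v)‖ := funext hP_eq
    rw [h]
    have huncurry : Continuous
        (Function.uncurry fun (v : ℝ) (u : ℝ) => ‖Gv (u, v)‖ ^ 2 * ‖G (u, v)‖) := by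
      have hs : Continuous fun p : ℝ × ℝ => ((p.2, p.1) : ℝ × ℝ) :=
        continuous_snd.prodMk continuous_fst
      exact (((hGvc.comp hs).norm.pow 2).mul (hGc.comp hs).norm)
    exact intervalIntegral.continuous_parametric_intervalIntegral_of_continuous'
      (μ := volume) huncurry 0 (2 * π)
  have hQ_cont : Continuous fun v =>
      ∫ u in (0:ℝ)..(2 * π), ‖(‖Cu n C u v‖⁻¹ : ℝ) • Cuv n C u v‖ ^ 2 * ‖Cu n C u v‖ := by
    have h : (fun v => ∫ u in (0:ℝ)..(2 * π), ‖(‖Cu n C u v‖⁻¹ : ℝ) • Cuv n C u v‖ ^ 2 * ‖Cu n C u v‖)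
        = fun v => ∫ u in (0:ℝ)..(2 * π), ‖(‖G (u, v)‖⁻¹ : ℝ) • G2 (u, v)‖ ^ 2 * ‖G (u, v)‖ :=
      funext hQ_eq
    rw [h]
    have huncurry : Continuous (Function.uncurry fun (v : ℝ) (u : ℝ) =>
        ‖(‖G (u, v)‖⁻¹ : ℝ) • G2 (u, v)‖ ^ 2 * ‖G (u, v)‖) := by
      have hs : Continuous fun p : ℝ × ℝ => ((p.2, p.1) : ℝ × ℝ) :=
        continuous_snd.prodMk continuous_fst
      have h1 : Continuous fun p : ℝ × ℝ => (‖G (p.2, p.1)‖⁻¹ : ℝ) • G2 (p.2, p.1) :=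
        ((hGc.comp hs).norm.inv₀ fun p => norm_ne_zero_iff.mpr (hGne _)).smul (hG2c.comp hs)
      exact ((h1.norm.pow 2).mul (hGc.comp hs).norm)
    exact intervalIntegral.continuous_parametric_intervalIntegral_of_continuous'
      (μ := volume) huncurry 0 (2 * π)
  have hH1_cont : Continuous fun v => H1normOfDeformation n C lam v := by
    simp only [H1normOfDeformation]
    exact Real.continuous_sqrt.comp
      (((hclen_cont.inv₀ fun v => (hclen_pos v).ne').mul hP_cont).add
        ((continuous_const.mul hclen_cont).mul hQ_cont))
  -- pointwise bound on `D`
  have hDb : ∀ v, |D v| ≤ (Real.sqrt lam)⁻¹ * H1normOfDeformation n C lam v := by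
    intro v
    have hcont2 : Continuous fun u => ‖G2 (u, v)‖ :=
      (hG2c.comp (continuous_id.prodMk continuous_const)).norm
    have hcont1 : Continuous fun u => ‖G (u, v)‖ :=
      (hGc.comp (continuous_id.prodMk continuous_const)).norm
    have hI : |D v| ≤ ∫ u in (0:ℝ)..(2 * π), ‖G2 (u, v)‖ := by
      calc |D v| ≤ ∫ u in (0:ℝ)..(2 * π), |gder u v| := by
            simpa only [hD_def] using intervalIntegral.abs_integral_le_integral_abs h2pi
        _ ≤ ∫ u in (0:ℝ)..(2 * π), ‖G2 (u, v)‖ := by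
            apply intervalIntegral.integral_mono_on h2pi
              ((hcontu v).abs.intervalIntegrable _ _) (hcont2.intervalIntegrable _ _)
            exact fun u _ => hgb u v
    set I := ∫ u in (0:ℝ)..(2 * π), ‖G2 (u, v)‖ with hI_def
    have hI0 : 0 ≤ I :=
      intervalIntegral.integral_nonneg h2pi fun _ _ => norm_nonneg _
    -- Cauchy–Schwarz
    set f : ℝ → ℝ := fun u => ‖G2 (u, v)‖ / Real.sqrt ‖G (u, v)‖ with hf_def
    set g : ℝ → ℝ := fun u => Real.sqrt ‖G (u, v)‖ with hg_def
    have hsqrt_ne : ∀ u : ℝ, Real.sqrt ‖G (u, v)‖ ≠ 0 := fun u =>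
      (Real.sqrt_pos.mpr (norm_pos_iff.mpr (hGne (u, v)))).ne'
    have hfc : Continuous f := by
      simp only [hf_def]
      exact hcont2.div (Real.continuous_sqrt.comp hcont1) hsqrt_ne
    have hgc : Continuous g := by
      simp only [hg_def]
      exact Real.continuous_sqrt.comp hcont1
    have hCS := cs_interval hfc hgc h2pi
    have hfg : ∀ u, f u * g u = ‖G2 (u, v)‖ := fun u => by
      simp only [hf_def, hg_def]
      rw [div_mul_cancel₀ _ (hsqrt_ne u)]
    have hg2 : ∀ u, g u ^ 2 = ‖G (u, v)‖ := fun u => by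
      simp only [hg_def]
      exact Real.sq_sqrt (norm_nonneg _)
    have hf2 : ∀ u, f u ^ 2 = ‖(‖G (u, v)‖⁻¹ : ℝ) • G2 (u, v)‖ ^ 2 * ‖G (u, v)‖ := fun u => by
      have hne : ‖G (u, v)‖ ≠ 0 := norm_ne_zero_iff.mpr (hGne (u, v))
      simp only [hf_def]
      rw [div_pow, Real.sq_sqrt (norm_nonneg _), norm_smul, Real.norm_eq_abs, abs_inv, abs_norm,
        mul_pow]
      field_simp
    have hIeq : (∫ u in (0:ℝ)..(2 * π), f u * g u) = I := by
      rw [hI_def]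
      exact intervalIntegral.integral_congr fun u _ => hfg u
    have hgeq : (∫ u in (0:ℝ)..(2 * π), g u ^ 2) = clen n C v := by
      rw [hclen_eq]
      exact intervalIntegral.integral_congr fun u _ => hg2 u
    have hfeq : (∫ u in (0:ℝ)..(2 * π), f u ^ 2)
        = ∫ u in (0:ℝ)..(2 * π), ‖(‖Cu n C u v‖⁻¹ : ℝ) • Cuv n C u v‖ ^ 2 * ‖Cu n C u v‖ := by
      rw [hQ_eq]
      exact intervalIntegral.integral_congr fun u _ => hf2 u
    rw [hIeq, hgeq, hfeq] at hCS
    set Q := ∫ u in (0:ℝ)..(2 * π), ‖(‖Cu n C u v‖⁻¹ : ℝ) • Cuv n C u v‖ ^ 2 * ‖Cu n C u v‖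
      with hQ_def
    set P := ∫ u in (0:ℝ)..(2 * π), ‖deriv (fun v' => C u v') v‖ ^ 2 * ‖Cu n C u v‖ with hP_def
    have hP0 : 0 ≤ P :=
      intervalIntegral.integral_nonneg h2pi fun u _ =>
        mul_nonneg (sq_nonneg _) (norm_nonneg _)
    have hL0 : 0 < clen n C v := hclen_pos v
    have h1 : Real.sqrt lam * I ≤ H1normOfDeformation n C lam v := by
      have e1 : Real.sqrt lam * I = Real.sqrt (lam * I ^ 2) := by
        rw [Real.sqrt_mul hlam.le, Real.sqrt_sq hI0]
      rw [e1]
      simp only [H1normOfDeformation]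
      apply Real.sqrt_le_sqrt
      have h2 : lam * I ^ 2 ≤ lam * (Q * clen n C v) :=
        mul_le_mul_of_nonneg_left hCS hlam.le
      have h3 : 0 ≤ (clen n C v)⁻¹ * P :=
        mul_nonneg (inv_nonneg.mpr hL0.le) hP0
      nlinarith [h2, h3]
    have hsl : 0 < Real.sqrt lam := Real.sqrt_pos.mpr hlam
    calc |D v| ≤ I := hI
      _ = (Real.sqrt lam)⁻¹ * (Real.sqrt lam * I) := by field_simp
      _ ≤ (Real.sqrt lam)⁻¹ * H1normOfDeformation n C lam v :=
          mul_le_mul_of_nonneg_left h1 (inv_nonneg.mpr hsl.le)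
  -- fundamental theorem of calculus
  have hftc : (∫ v in (0:ℝ)..1, D v) = clen n C 1 - clen n C 0 :=
    intervalIntegral.integral_eq_sub_of_hasDerivAt (fun v _ => hD_hasDeriv v)
      (hD_cont.intervalIntegrable 0 1)
  rw [← hftc]
  calc |∫ v in (0:ℝ)..1, D v| ≤ ∫ v in (0:ℝ)..1, |D v| :=
        intervalIntegral.abs_integral_le_integral_abs zero_le_one
    _ ≤ ∫ v in (0:ℝ)..1, (Real.sqrt lam)⁻¹ * H1normOfDeformation n C lam v := by
        apply intervalIntegral.integral_mono_on zero_le_one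
          (hD_cont.abs.intervalIntegrable _ _)
          ((continuous_const.mul hH1_cont).intervalIntegrable _ _)
        exact fun v _ => hDb v
    _ = (Real.sqrt lam)⁻¹ * ∫ v in (0:ℝ)..1, H1normOfDeformation n C lam v :=
        intervalIntegral.integral_const_mul _ _
end

section
/- Let g : ℝⁿ → ℝ be C¹, c : S¹ → ℝⁿ a smooth immersed closed curve of length L, and ⟨g(c)⟩ := (1/L)∫ g(c(s)) ds. Then the first variation in direction h is d/dε|_{ε=0} ⟨g(c+εh)⟩ = (1/L) ∫ [∇g(c)·h + (g(c) − ⟨g(c)⟩)⟨D_s h, T⟩] ds. -/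
open Real MeasureTheory
open scoped RealInnerProductSpace

private lemma hasDerivAt_norm_aux {E : Type*} [NormedAddCommGroup E] [InnerProductSpace ℝ E]
    {u : ℝ → E} {w : E} {ε : ℝ} (hu : HasDerivAt u w ε) (hne : u ε ≠ 0) :
    HasDerivAt (fun e => ‖u e‖) (⟪u ε, w⟫ / ‖u ε‖) ε := by
  have hn : ‖u ε‖ ≠ 0 := norm_ne_zero_iff.mpr hne
  have h1 : HasDerivAt (fun e => ‖u e‖ ^ 2) (2 * ⟪u ε, w⟫) ε := hu.norm_sq
  have h2 := (Real.hasDerivAt_sqrt (x := ‖u ε‖ ^ 2) (pow_ne_zero 2 hn)).comp ε h1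
  have h3 : (fun e => Real.sqrt (‖u e‖ ^ 2)) = fun e => ‖u e‖ := by
    funext e; exact Real.sqrt_sq (norm_nonneg _)
  rw [Function.comp_def, h3] at h2
  refine h2.congr_deriv ?_
  rw [Real.sqrt_sq (norm_nonneg _)]
  field_simp

private lemma param_deriv {a b ε₀ : ℝ} (hε₀ : 0 < ε₀)
    {Φ Φ' : ℝ → ℝ → ℝ}
    (hΦ : ∀ ε, Continuous (Φ ε))
    (hΦ' : ContinuousOn (fun p : ℝ × ℝ => Φ' p.1 p.2)
      (Metric.closedBall 0 ε₀ ×ˢ Set.uIcc a b))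
    (hd : ∀ θ ∈ Set.uIcc a b, ∀ ε ∈ Metric.ball (0:ℝ) ε₀,
      HasDerivAt (fun e => Φ e θ) (Φ' ε θ) ε) :
    HasDerivAt (fun ε => ∫ θ in a..b, Φ ε θ) (∫ θ in a..b, Φ' 0 θ) 0 := by
  obtain ⟨C, hC⟩ := ((isCompact_closedBall (0:ℝ) ε₀).prod isCompact_uIcc).exists_bound_of_continuousOn hΦ'
  refine (intervalIntegral.hasDerivAt_integral_of_dominated_loc_of_deriv_le
    (bound := fun _ => C) (Metric.ball_mem_nhds 0 hε₀) ?_ ?_ ?_ ?_ ?_ ?_).2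
  · filter_upwards with ε using (hΦ ε).aestronglyMeasurable
  · exact (hΦ 0).intervalIntegrable _ _
  · refine ContinuousOn.aestronglyMeasurable ?_ measurableSet_uIoc
    have : ContinuousOn (fun θ => Φ' 0 θ) (Set.uIcc a b) := by
      have hmap : ContinuousOn (fun θ : ℝ => ((0:ℝ), θ)) (Set.uIcc a b) :=
        (continuous_const.prodMk continuous_id).continuousOn
      exact hΦ'.comp hmap fun θ hθ => ⟨Metric.mem_closedBall_self hε₀.le, hθ⟩
    exact this.mono Set.uIoc_subset_uIcc
  · filter_upwards with θ
    intro hθ ε hε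
    exact hC (ε, θ) ⟨Metric.ball_subset_closedBall hε, Set.uIoc_subset_uIcc hθ⟩
  · exact intervalIntegrable_const
  · filter_upwards with θ
    intro hθ ε hε
    exact hd θ (Set.uIoc_subset_uIcc hθ) ε hε

/-- First variation of the average `⟨g(c)⟩ = (1/L)∫ g(c(s)) ds` of a C¹
function `g : ℝⁿ → ℝ` along a smooth closed immersed curve `c` (modeled as a
2π-periodic map), in the direction of a smooth deformation `h`:
`d/dε|₀ ⟨g(c+εh)⟩ = (1/L)∫ [∇g(c)·h + (g(c) − ⟨g(c)⟩)⟨D_s h, T⟩] ds`. -/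
theorem first_variation_of_average
    (n : ℕ) (g : EuclideanSpace ℝ (Fin n) → ℝ) (hg : ContDiff ℝ 1 g)
    (c h : ℝ → EuclideanSpace ℝ (Fin n))
    (hc : ContDiff ℝ (⊤ : ℕ∞) c) (hh : ContDiff ℝ (⊤ : ℕ∞) h)
    (hcper : ∀ θ, c (θ + 2 * π) = c θ) (hhper : ∀ θ, h (θ + 2 * π) = h θ)
    (himm : ∀ θ, deriv c θ ≠ 0) :
    HasDerivAt
      (fun ε : ℝ =>
        (∫ θ in (0:ℝ)..(2 * π), ‖deriv (fun θ' => c θ' + ε • h θ') θ‖)⁻¹ *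
          ∫ θ in (0:ℝ)..(2 * π),
            g (c θ + ε • h θ) * ‖deriv (fun θ' => c θ' + ε • h θ') θ‖)
      ((∫ θ in (0:ℝ)..(2 * π), ‖deriv c θ‖)⁻¹ *
        ∫ θ in (0:ℝ)..(2 * π),
          (fderiv ℝ g (c θ) (h θ) +
            (g (c θ) -
              (∫ θ' in (0:ℝ)..(2 * π), ‖deriv c θ'‖)⁻¹ *
                ∫ θ' in (0:ℝ)..(2 * π), g (c θ') * ‖deriv c θ'‖) *
              ⟪‖deriv c θ‖⁻¹ • deriv h θ, ‖deriv c θ‖⁻¹ • deriv c θ⟫) *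
            ‖deriv c θ‖) 0 := by
  have hπ : (0:ℝ) < 2 * π := by positivity
  have hdc : Continuous (deriv c) := hc.continuous_deriv (mod_cast le_top)
  have hdh : Continuous (deriv h) := hh.continuous_deriv (mod_cast le_top)
  have hcd : ∀ θ, HasDerivAt c (deriv c θ) θ :=
    fun θ => (hc.differentiable (by simp) θ).hasDerivAt
  have hhd : ∀ θ, HasDerivAt h (deriv h θ) θ :=
    fun θ => (hh.differentiable (by simp) θ).hasDerivAt
  -- rewrite deriv of perturbed curve
  have hderiv : ∀ (ε : ℝ) (θ : ℝ),
      deriv (fun θ' => c θ' + ε • h θ') θ = deriv c θ + ε • deriv h θ :=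
    fun ε θ => ((hcd θ).add ((hhd θ).const_smul ε)).deriv
  -- bounds on [0, 2π]
  have hIcc : Set.uIcc (0:ℝ) (2 * π) = Set.Icc 0 (2 * π) := Set.uIcc_of_le hπ.le
  obtain ⟨θ₀, hθ₀mem, hθ₀⟩ := isCompact_Icc.exists_isMinOn
    (⟨0, Set.left_mem_Icc.2 hπ.le⟩ : (Set.Icc (0:ℝ) (2*π)).Nonempty) hdc.norm.continuousOn
  obtain ⟨θ₁, hθ₁mem, hθ₁⟩ := isCompact_Icc.exists_isMaxOn
    (⟨0, Set.left_mem_Icc.2 hπ.le⟩ : (Set.Icc (0:ℝ) (2*π)).Nonempty) hdh.norm.continuousOn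
  set m := ‖deriv c θ₀‖ with hm_def
  set M := ‖deriv h θ₁‖ with hM_def
  have hm : 0 < m := norm_pos_iff.2 (himm θ₀)
  have hM0 : 0 ≤ M := norm_nonneg _
  set ε₀ := m / (2 * (M + 1)) with hε₀_def
  have hε₀ : 0 < ε₀ := by positivity
  -- lower bound for the perturbed speed
  have hlow : ∀ θ ∈ Set.Icc (0:ℝ) (2*π), ∀ ε : ℝ, |ε| ≤ ε₀ →
      0 < ‖deriv c θ + ε • deriv h θ‖ := by
    intro θ hθ ε hε
    have h1 : ‖deriv c θ‖ - ‖ε • deriv h θ‖ ≤ ‖deriv c θ + ε • deriv h θ‖ := by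
      have := norm_sub_norm_le (deriv c θ) (-(ε • deriv h θ))
      simpa [sub_neg_eq_add] using this
    have h2 : ‖ε • deriv h θ‖ ≤ ε₀ * M := by
      rw [norm_smul]
      exact mul_le_mul hε (hθ₁ hθ) (norm_nonneg _) hε₀.le
    have h3 : m ≤ ‖deriv c θ‖ := hθ₀ hθ
    have h4 : ε₀ * M < m := by
      rw [hε₀_def]
      rw [div_mul_eq_mul_div, div_lt_iff₀ (by positivity)]
      nlinarith
    linarith
  have hne : ∀ θ ∈ Set.Icc (0:ℝ) (2*π), ∀ ε : ℝ, |ε| ≤ ε₀ →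
      deriv c θ + ε • deriv h θ ≠ 0 := by
    intro θ hθ ε hε
    exact norm_pos_iff.1 (hlow θ hθ ε hε)
  -- derivative in ε of the perturbed curve pointwise
  have huderiv : ∀ (θ : ℝ) (ε : ℝ),
      HasDerivAt (fun e : ℝ => deriv c θ + e • deriv h θ) (deriv h θ) ε := by
    intro θ ε
    have := ((hasDerivAt_id ε).smul_const (deriv h θ)).const_add (deriv c θ)
    simpa using this
  -- F and its derivative
  set ΦF : ℝ → ℝ → ℝ := fun ε θ => ‖deriv c θ + ε • deriv h θ‖ with hΦF_def
  set ΦF' : ℝ → ℝ → ℝ := fun ε θ =>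
    ⟪deriv c θ + ε • deriv h θ, deriv h θ⟫ / ‖deriv c θ + ε • deriv h θ‖ with hΦF'_def
  have hΦFc : ∀ ε, Continuous (ΦF ε) := fun ε => (hdc.add (hdh.const_smul ε)).norm
  have hucont : Continuous (fun p : ℝ × ℝ => deriv c p.2 + p.1 • deriv h p.2) :=
    (hdc.comp continuous_snd).add (continuous_fst.smul (hdh.comp continuous_snd))
  have hKne : ∀ p : ℝ × ℝ, p ∈ Metric.closedBall (0:ℝ) ε₀ ×ˢ Set.uIcc (0:ℝ) (2*π) →
      deriv c p.2 + p.1 • deriv h p.2 ≠ 0 := by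
    intro p hp
    rw [hIcc] at hp
    exact hne p.2 hp.2 p.1 (by simpa [Real.dist_eq] using hp.1)
  have hΦF'c : ContinuousOn (fun p : ℝ × ℝ => ΦF' p.1 p.2)
      (Metric.closedBall 0 ε₀ ×ˢ Set.uIcc (0:ℝ) (2*π)) := by
    apply ContinuousOn.div
    · exact (hucont.inner (hdh.comp continuous_snd)).continuousOn
    · exact hucont.norm.continuousOn
    · intro p hp; exact norm_ne_zero_iff.2 (hKne p hp)
  have hFd : ∀ θ ∈ Set.uIcc (0:ℝ) (2*π), ∀ ε ∈ Metric.ball (0:ℝ) ε₀,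
      HasDerivAt (fun e => ΦF e θ) (ΦF' ε θ) ε := by
    intro θ hθ ε hε
    rw [hIcc] at hθ
    exact hasDerivAt_norm_aux (huderiv θ ε)
      (hne θ hθ ε (le_of_lt (by simpa [Real.dist_eq] using hε)))
  have hF := param_deriv hε₀ hΦFc hΦF'c hFd
  -- G and its derivative
  set ΦG : ℝ → ℝ → ℝ := fun ε θ => g (c θ + ε • h θ) * ‖deriv c θ + ε • deriv h θ‖
    with hΦG_def
  set ΦG' : ℝ → ℝ → ℝ := fun ε θ =>
    (fderiv ℝ g (c θ + ε • h θ)) (h θ) * ‖deriv c θ + ε • deriv h θ‖ +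
      g (c θ + ε • h θ) * (⟪deriv c θ + ε • deriv h θ, deriv h θ⟫ /
        ‖deriv c θ + ε • deriv h θ‖) with hΦG'_def
  have hgc : Continuous g := hg.continuous
  have hΦGc : ∀ ε, Continuous (ΦG ε) := fun ε =>
    (hgc.comp (hc.continuous.add (hh.continuous.const_smul ε))).mul
      (hdc.add (hdh.const_smul ε)).norm
  have hvcont : Continuous (fun p : ℝ × ℝ => c p.2 + p.1 • h p.2) :=
    (hc.continuous.comp continuous_snd).add (continuous_fst.smul (hh.continuous.comp continuous_snd))
  have hΦG'c : ContinuousOn (fun p : ℝ × ℝ => ΦG' p.1 p.2)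
      (Metric.closedBall 0 ε₀ ×ˢ Set.uIcc (0:ℝ) (2*π)) := by
    apply ContinuousOn.add
    · exact (((hg.continuous_fderiv one_ne_zero).comp hvcont).clm_apply
        (hh.continuous.comp continuous_snd)).continuousOn.mul hucont.norm.continuousOn
    · refine ((hgc.comp hvcont).continuousOn).mul (ContinuousOn.div ?_ ?_ ?_)
      · exact (hucont.inner (hdh.comp continuous_snd)).continuousOn
      · exact hucont.norm.continuousOn
      · intro p hp; exact norm_ne_zero_iff.2 (hKne p hp)
  have hGd : ∀ θ ∈ Set.uIcc (0:ℝ) (2*π), ∀ ε ∈ Metric.ball (0:ℝ) ε₀,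
      HasDerivAt (fun e => ΦG e θ) (ΦG' ε θ) ε := by
    intro θ hθ ε hε
    rw [hIcc] at hθ
    have hv : HasDerivAt (fun e : ℝ => c θ + e • h θ) (h θ) ε := by
      have := ((hasDerivAt_id ε).smul_const (h θ)).const_add (c θ)
      simpa using this
    have hgud : HasDerivAt (fun e : ℝ => g (c θ + e • h θ))
        ((fderiv ℝ g (c θ + ε • h θ)) (h θ)) ε :=
      (hg.differentiable one_ne_zero (c θ + ε • h θ)).hasFDerivAt.comp_hasDerivAt ε hv
    have hnd : HasDerivAt (fun e : ℝ => ‖deriv c θ + e • deriv h θ‖)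
        (⟪deriv c θ + ε • deriv h θ, deriv h θ⟫ / ‖deriv c θ + ε • deriv h θ‖) ε :=
      hasDerivAt_norm_aux (huderiv θ ε)
        (hne θ hθ ε (le_of_lt (by simpa [Real.dist_eq] using hε)))
    exact hgud.mul hnd
  have hG := param_deriv hε₀ hΦGc hΦG'c hGd
  -- simplify values at 0
  have hΦF0 : ΦF 0 = fun θ => ‖deriv c θ‖ := by funext θ; simp [hΦF_def]
  have hΦG0 : ΦG 0 = fun θ => g (c θ) * ‖deriv c θ‖ := by funext θ; simp [hΦG_def]
  set L := ∫ θ in (0:ℝ)..(2*π), ‖deriv c θ‖ with hL_def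
  set Q := ∫ θ in (0:ℝ)..(2*π), g (c θ) * ‖deriv c θ‖ with hQ_def
  have hL : 0 < L := by
    rw [hL_def]
    apply intervalIntegral.intervalIntegral_pos_of_pos_on
    · exact hdc.norm.intervalIntegrable _ _
    · intro x hx; exact norm_pos_iff.2 (himm x)
    · exact hπ
  have hLne : L ≠ 0 := hL.ne'
  -- combine
  have hFF : HasDerivAt (fun ε => ∫ θ in (0:ℝ)..(2*π), ΦF ε θ)
      (∫ θ in (0:ℝ)..(2*π), ΦF' 0 θ) 0 := hF
  have hGG : HasDerivAt (fun ε => ∫ θ in (0:ℝ)..(2*π), ΦG ε θ)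
      (∫ θ in (0:ℝ)..(2*π), ΦG' 0 θ) 0 := hG
  have hF0 : (∫ θ in (0:ℝ)..(2*π), ΦF 0 θ) = L := by rw [hΦF0, hL_def]
  have hG0 : (∫ θ in (0:ℝ)..(2*π), ΦG 0 θ) = Q := by rw [hΦG0, hQ_def]
  have hcomb := (hFF.inv (by rw [hF0]; exact hLne)).mul hGG
  -- identify the function
  have hfun : (fun ε : ℝ =>
      (∫ θ in (0:ℝ)..(2 * π), ‖deriv (fun θ' => c θ' + ε • h θ') θ‖)⁻¹ *
        ∫ θ in (0:ℝ)..(2 * π), g (c θ + ε • h θ) * ‖deriv (fun θ' => c θ' + ε • h θ') θ‖)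
      = fun ε => (∫ θ in (0:ℝ)..(2*π), ΦF ε θ)⁻¹ * ∫ θ in (0:ℝ)..(2*π), ΦG ε θ := by
    funext ε
    have e1 : (∫ θ in (0:ℝ)..(2 * π), ‖deriv (fun θ' => c θ' + ε • h θ') θ‖)
        = ∫ θ in (0:ℝ)..(2*π), ΦF ε θ :=
      intervalIntegral.integral_congr fun θ _ => by rw [hΦF_def, hderiv]
    have e2 : (∫ θ in (0:ℝ)..(2 * π),
          g (c θ + ε • h θ) * ‖deriv (fun θ' => c θ' + ε • h θ') θ‖)
        = ∫ θ in (0:ℝ)..(2*π), ΦG ε θ :=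
      intervalIntegral.integral_congr fun θ _ => by rw [hΦG_def, hderiv]
    rw [e1, e2]
  rw [hfun]
  refine hcomb.congr_deriv ?_
  simp only [Pi.inv_apply]
  -- value equality
  set Fd := ∫ θ in (0:ℝ)..(2*π), ΦF' 0 θ with hFd_def
  set Gd := ∫ θ in (0:ℝ)..(2*π), ΦG' 0 θ with hGd_def
  rw [hF0, hG0]
  -- compute the target integral
  have hXcont : Continuous (fun θ => (fderiv ℝ g (c θ)) (h θ) * ‖deriv c θ‖ +
      g (c θ) * (⟪deriv c θ, deriv h θ⟫ / ‖deriv c θ‖)) := by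
    apply Continuous.add
    · exact (((hg.continuous_fderiv one_ne_zero).comp hc.continuous).clm_apply hh.continuous).mul hdc.norm
    · exact (hgc.comp hc.continuous).mul ((hdc.inner hdh).div hdc.norm
        (fun θ => norm_ne_zero_iff.2 (himm θ)))
  have hYcont : Continuous (fun θ => ⟪deriv c θ, deriv h θ⟫ / ‖deriv c θ‖) :=
    (hdc.inner hdh).div hdc.norm (fun θ => norm_ne_zero_iff.2 (himm θ))
  have hFd0 : Fd = ∫ θ in (0:ℝ)..(2*π), ⟪deriv c θ, deriv h θ⟫ / ‖deriv c θ‖ := by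
    rw [hFd_def]; apply intervalIntegral.integral_congr; intro θ _
    simp [hΦF'_def]
  have hGd0 : Gd = ∫ θ in (0:ℝ)..(2*π), ((fderiv ℝ g (c θ)) (h θ) * ‖deriv c θ‖ +
      g (c θ) * (⟪deriv c θ, deriv h θ⟫ / ‖deriv c θ‖)) := by
    rw [hGd_def]; apply intervalIntegral.integral_congr; intro θ _
    simp [hΦG'_def]
  -- pointwise identity for the target integrand
  have hpt : ∀ θ : ℝ,
      ((fderiv ℝ g (c θ)) (h θ) +
        (g (c θ) - L⁻¹ * Q) *
          ⟪‖deriv c θ‖⁻¹ • deriv h θ, ‖deriv c θ‖⁻¹ • deriv c θ⟫) * ‖deriv c θ‖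
      = ((fderiv ℝ g (c θ)) (h θ) * ‖deriv c θ‖ +
          g (c θ) * (⟪deriv c θ, deriv h θ⟫ / ‖deriv c θ‖)) -
        (L⁻¹ * Q) * (⟪deriv c θ, deriv h θ⟫ / ‖deriv c θ‖) := by
    intro θ
    have hn : ‖deriv c θ‖ ≠ 0 := norm_ne_zero_iff.2 (himm θ)
    rw [real_inner_smul_left, real_inner_smul_right, real_inner_comm]
    field_simp
    ring
  have htarget : (∫ θ in (0:ℝ)..(2 * π),
      ((fderiv ℝ g (c θ)) (h θ) +
        (g (c θ) - L⁻¹ * Q) *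
          ⟪‖deriv c θ‖⁻¹ • deriv h θ, ‖deriv c θ‖⁻¹ • deriv c θ⟫) * ‖deriv c θ‖)
      = Gd - (L⁻¹ * Q) * Fd := by
    rw [intervalIntegral.integral_congr (fun θ _ => hpt θ), hGd0, hFd0,
      intervalIntegral.integral_sub (hXcont.intervalIntegrable _ _)
        (show IntervalIntegrable (fun θ => L⁻¹ * Q * (⟪deriv c θ, deriv h θ⟫ / ‖deriv c θ‖)) volume 0 (2 * π) from
          (continuous_const.mul hYcont).intervalIntegrable _ _),
      intervalIntegral.integral_const_mul]
  rw [htarget]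
  field_simp
  ring
end

section
/- Suppose 0 < L₀/2 < L(t) < 3L₀/2 for all t ∈ [0,1], N(t) ≤ a₂ d for all t, and |E'(t)| ≤ 2N(t) + 2E(t)N(t) + 3E(t)√(L(t))N(t) with E ≥ 0 continuous, differentiable. Then E(1) ≤ (E(0) + 2a₂ d) · exp((2 + 3a₄) a₂ d), where a₄ = √(3L₀/2). -/
open Real

/-- The Gronwall-type estimate from the proof that the elastic energy is locally
Lipschitz for the `H²` distance: if `L₀/2 < L(t) < 3L₀/2`, `N(t) ≤ a₂ d`, and
`|E'(t)| ≤ 2N(t) + 2E(t)N(t) + 3E(t)√(L(t))N(t)` on `[0,1]`, then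
`E(1) ≤ (E(0) + 2a₂d) exp((2 + 3a₄) a₂ d)` with `a₄ = √(3L₀/2)`. -/
theorem gronwall_elastic_energy
    (L N E E' : ℝ → ℝ) (L₀ a₂ d : ℝ)
    (hL₀ : 0 < L₀) (ha₂ : 0 < a₂) (hd : 0 ≤ d)
    (hE : ∀ t ∈ Set.Icc (0:ℝ) 1, HasDerivAt E (E' t) t)
    (hEnn : ∀ t ∈ Set.Icc (0:ℝ) 1, 0 ≤ E t)
    (hNnn : ∀ t ∈ Set.Icc (0:ℝ) 1, 0 ≤ N t)
    (hLb : ∀ t ∈ Set.Icc (0:ℝ) 1, L₀ / 2 < L t ∧ L t < 3 * L₀ / 2)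
    (hN : ∀ t ∈ Set.Icc (0:ℝ) 1, N t ≤ a₂ * d)
    (hE' : ∀ t ∈ Set.Icc (0:ℝ) 1,
      |E' t| ≤ 2 * N t + 2 * E t * N t + 3 * E t * Real.sqrt (L t) * N t) :
    E 1 ≤ (E 0 + 2 * a₂ * d) *
      Real.exp ((2 + 3 * Real.sqrt (3 * L₀ / 2)) * a₂ * d) := by
  set a₄ : ℝ := Real.sqrt (3 * L₀ / 2) with ha₄
  set K : ℝ := (2 + 3 * a₄) * a₂ * d with hK
  set ε : ℝ := 2 * a₂ * d with hε
  have ha₄nn : 0 ≤ a₄ := Real.sqrt_nonneg _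
  have hKnn : 0 ≤ K := by positivity
  have hεnn : 0 ≤ ε := by positivity
  -- apply Gronwall's inequality
  have key : ∀ t ∈ Set.Icc (0:ℝ) 1, E t ≤ gronwallBound (E 0) K ε (t - 0) := by
    apply le_gronwallBound_of_liminf_deriv_right_le
      (f' := E') (fun t ht => (hE t ht).continuousAt.continuousWithinAt)
    · intro x hx r hr
      exact ((hE x (Set.mem_Icc_of_Ico hx)).hasDerivWithinAt.mono
        (Set.Ici_subset_Ici.2 le_rfl)).liminf_right_slope_le hr
    · exact le_rfl
    · intro t ht
      have ht' : t ∈ Set.Icc (0:ℝ) 1 := Set.mem_Icc_of_Ico ht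
      have h1 := hE' t ht'
      have hEt := hEnn t ht'
      have hNt := hNnn t ht'
      have hNb := hN t ht'
      have hsq : Real.sqrt (L t) ≤ a₄ :=
        Real.sqrt_le_sqrt (le_of_lt (hLb t ht').2)
      have h2 : 2 * E t * N t + 3 * E t * Real.sqrt (L t) * N t ≤ K * E t := by
        have : 2 * E t * N t + 3 * E t * Real.sqrt (L t) * N t
            = (2 + 3 * Real.sqrt (L t)) * N t * E t := by ring
        rw [this, hK]
        have hb : (2 + 3 * Real.sqrt (L t)) * N t ≤ (2 + 3 * a₄) * (a₂ * d) := by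
          apply mul_le_mul (by nlinarith) hNb hNt (by positivity)
        calc (2 + 3 * Real.sqrt (L t)) * N t * E t
            ≤ (2 + 3 * a₄) * (a₂ * d) * E t := mul_le_mul_of_nonneg_right hb hEt
          _ = (2 + 3 * a₄) * a₂ * d * E t := by ring
      have h3 : 2 * N t ≤ ε := by rw [hε]; linarith
      calc E' t ≤ |E' t| := le_abs_self _
        _ ≤ 2 * N t + (2 * E t * N t + 3 * E t * Real.sqrt (L t) * N t) := by linarith
        _ ≤ ε + K * E t := by linarith
        _ = K * E t + ε := by ring
  have h1 := key 1 (by norm_num)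
  simp only [sub_zero] at h1
  refine h1.trans ?_
  rcases eq_or_lt_of_le hKnn with hK0 | hKpos
  · -- K = 0 forces d = 0 and ε = 0
    have hd0 : d = 0 := by
      by_contra h
      have : 0 < d := lt_of_le_of_ne hd (Ne.symm h)
      have : 0 < K := by rw [hK]; positivity
      exact absurd hK0 (by linarith)
    rw [← hK0, gronwallBound_K0]
    simp [hε, hd0, hK]
  · rw [gronwallBound_of_K_ne_0 (ne_of_gt hKpos)]
    simp only [mul_one]
    have hexp : 1 ≤ Real.exp K := Real.one_le_exp hKnn
    have hE0 : 0 ≤ E 0 := hEnn 0 (by norm_num)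
    have hεK : ε / K * (Real.exp K - 1) ≤ ε * Real.exp K := by
      rw [div_mul_eq_mul_div, div_le_iff₀ hKpos]
      have hm : Real.exp (-K) * Real.exp K = 1 := by
        rw [← Real.exp_add]; simp
      have h5 : (-K + 1) * Real.exp K ≤ Real.exp (-K) * Real.exp K :=
        mul_le_mul_of_nonneg_right (Real.add_one_le_exp (-K)) (Real.exp_pos K).le
      rw [hm] at h5
      nlinarith [Real.exp_pos K]
    nlinarith [hεK]
end
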